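/- Let U be a stable ordered-union ultrafilter on FIN and let F be a front on some X ∈ FIN^[∞] with [X] ∈ U. Then the collection U↾F of all subsets A ⊆ F such that F|Y ⊆ A for some Y ≤ X with [Y] ∈ U is an ultrafilter on the base set F. -/

import Mathlib

open Classical

attribute [local instance] Classical.propDecidable

set_option maxHeartbeats 1000000

/-! ### FIN and block sequences -/

/-- `FIN`: the finite nonempty subsets of `ℕ`. -/
abbrev FIN : Type := {s : Finset ℕ // s.Nonempty}

instance : Inhabited FIN := ⟨⟨{0}, Finset.singleton_nonempty 0⟩⟩

/-- The least element of a member of `FIN`. -/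
def sMin (s : FIN) : ℕ := s.1.min' s.2

/-- The greatest element of a member of `FIN`. -/
def sMax (s : FIN) : ℕ := s.1.max' s.2

/-- `minmax(s) = (min s, max s)`. -/
def minmaxF (s : FIN) : ℕ × ℕ := (sMin s, sMax s)

/-- `s <_b t`: the block `s` lies entirely below the block `t`. -/
def blt (s t : FIN) : Prop := sMax s < sMin t

/-- Union of two members of `FIN`. -/
def funion (s t : FIN) : FIN :=
  ⟨s.1 ∪ t.1, by rcases s.2 with ⟨x, hx⟩; exact ⟨x, Finset.mem_union_left _ hx⟩⟩

/-- `X : ℕ → FIN` is an infinite block sequence. -/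
def IsBSeq (X : ℕ → FIN) : Prop := ∀ i, blt (X i) (X (i + 1))

/-- A finite block sequence, coded as a list. -/
def IsFBSeq (a : List FIN) : Prop := a.Chain' blt

/-- `[X]`: the set of unions of finitely many (at least one) blocks of `X`. -/
def BU (X : ℕ → FIN) : Set FIN :=
  {s | ∃ I : Finset ℕ, I.Nonempty ∧ s.1 = I.biUnion fun i => (X i).1}

/-- `X ≤ Y` for infinite block sequences. -/
def seqLE (X Y : ℕ → FIN) : Prop := ∀ i, X i ∈ BU Y

/-- `a ≤ Y` for a finite block sequence `a`. -/
def finLE (a : List FIN) (Y : ℕ → FIN) : Prop := ∀ s ∈ a, s ∈ BU Y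

/-- every block of `a` lies below every block of `x`. -/
def listblt (a x : List FIN) : Prop := ∀ s ∈ a, ∀ t ∈ x, blt s t

/-- `X ≤* Y`: some tail `X/n` satisfies `X/n ≤ Y`. -/
def leStar (X Y : ℕ → FIN) : Prop := ∃ n : ℕ, ∀ i, n < sMin (X i) → X i ∈ BU Y

/-- `U` is an ordered-union ultrafilter on `FIN`. -/
def IsOrderedUnion (U : Ultrafilter FIN) : Prop :=
  ∀ A ∈ U, ∃ X : ℕ → FIN, IsBSeq X ∧ BU X ∈ U ∧ BU X ⊆ A

/-- `U` is a stable ordered-union ultrafilter on `FIN`. -/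
def IsStableOrderedUnion (U : Ultrafilter FIN) : Prop :=
  IsOrderedUnion U ∧
    ∀ Xs : ℕ → ℕ → FIN, (∀ i, IsBSeq (Xs i)) → (∀ i, BU (Xs i) ∈ U) →
      (∀ i, leStar (Xs (i + 1)) (Xs i)) →
      ∃ X : ℕ → FIN, IsBSeq X ∧ BU X ∈ U ∧ ∀ i, leStar X (Xs i)

/-! ### Tukey and Rudin–Keisler notions -/

/-- `B` is a filter base (cofinal subset) for the ultrafilter `U`. -/
def IsBaseFor {α : Type} (U : Ultrafilter α) (B : Set (Set α)) : Prop :=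
  (∀ b ∈ B, b ∈ U) ∧ ∀ A ∈ U, ∃ b ∈ B, b ⊆ A

/-- `V ≤_T U`: Tukey reducibility. -/
def TukeyLE {β α : Type} (V : Ultrafilter β) (U : Ultrafilter α) : Prop :=
  ∃ f : Set α → Set β, ∀ B : Set (Set α), IsBaseFor U B → IsBaseFor V (f '' B)

/-- `U ≡_T V`: Tukey equivalence. -/
def TukeyEquiv {α β : Type} (U : Ultrafilter α) (V : Ultrafilter β) : Prop :=
  TukeyLE U V ∧ TukeyLE V U

/-- `V` is nonprincipal. -/
def Nonprincipal {α : Type} (V : Ultrafilter α) : Prop := ∀ a : α, V ≠ pure a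

/-- `U` and `V` are isomorphic (Rudin–Keisler equivalent): some bijection of the base
sets maps one to the other. -/
def RKIso {α β : Type} (U : Ultrafilter α) (V : Ultrafilter β) : Prop :=
  ∃ e : α ≃ β, Ultrafilter.map (fun a => e a) U = V

/-- The Fubini limit `lim_{i → V} W_i`, an ultrafilter on `I × A`. -/
def fubini {I A : Type} (V : Ultrafilter I) (W : I → Ultrafilter A) : Ultrafilter (I × A) :=
  V.bind fun i => (W i).map fun a => (i, a)

/-- The class `C₀ = {U, U_min, U_max, U_minmax}`. -/
inductive InC0 (U : Ultrafilter FIN) : ∀ {α : Type}, Ultrafilter α → Prop where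
  | u : InC0 U U
  | min : InC0 U (U.map sMin)
  | max : InC0 U (U.map sMax)
  | minmax : InC0 U (U.map minmaxF)

/-- The class `C_{ω₁}` of countable Fubini iterates of `U, U_min, U_max, U_minmax`. -/
inductive InC (U : Ultrafilter FIN) : ∀ {α : Type}, Ultrafilter α → Prop where
  | base {α : Type} (V : Ultrafilter α) : InC0 U V → InC U V
  | fub {I A : Type} (V : Ultrafilter I) (W : I → Ultrafilter A) :
      InC0 U V → (∀ i, InC U (W i)) → InC U (fubini V W)

/-- The class `D_{ω₁}(W)` of countable Fubini iterates of a single ultrafilter `W`. -/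
inductive IterC {β : Type} (W : Ultrafilter β) : ∀ {α : Type}, Ultrafilter α → Prop where
  | base : IterC W W
  | fub {A : Type} (Ws : β → Ultrafilter A) : (∀ i, IterC W (Ws i)) → IterC W (fubini W Ws)

/-! ### Fronts -/

/-- `a` is an initial segment of the infinite block sequence `Y`. -/
def IsInit (a : List FIN) (Y : ℕ → FIN) : Prop := ∀ i : Fin a.length, a.get i = Y i

/-- Nash-Williams family: no member is a proper initial segment of another. -/
def IsNashWilliams (B : Set (List FIN)) : Prop :=
  ∀ a ∈ B, ∀ b ∈ B, a <+: b → a = b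

/-- `F` is a front on `X`. -/
def IsFront (F : Set (List FIN)) (X : ℕ → FIN) : Prop :=
  IsNashWilliams F ∧ (∀ a ∈ F, IsFBSeq a ∧ finLE a X) ∧
    ∀ Y : ℕ → FIN, IsBSeq Y → seqLE Y X → ∃ a ∈ F, IsInit a Y

/-- `F̂`: all initial segments of members of `F` (including the empty sequence). -/
def hatF (F : Set (List FIN)) : Set (List FIN) := {a | ∃ b ∈ F, a <+: b}

/-- `F|Y`. -/
def frontRestrict (F : Set (List FIN)) (Y : ℕ → FIN) : Set (List FIN) :=
  {a | a ∈ F ∧ finLE a Y}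

/-- `F̂|Y`. -/
def hatRestrict (F : Set (List FIN)) (Y : ℕ → FIN) : Set (List FIN) :=
  {a | a ∈ hatF F ∧ finLE a Y}

/-! ### Uniform fronts -/

/-- `X/n`, the tail of `X` made of blocks with minimum `> n`. -/
noncomputable def tailSeq (X : ℕ → FIN) (n : ℕ) : ℕ → FIN := fun j =>
  if h : ∃ i, n < sMin (X i) then X (Nat.find h + j) else X j

/-- `B_(s) = {a : s <_b a, s⌢a ∈ B}`. -/
def Bsub (B : Set (List FIN)) (s : FIN) : Set (List FIN) :=
  {a | (∀ t ∈ a, blt s t) ∧ (s :: a) ∈ B}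

/-- A set `A ⊆ FIN` is small if it contains no `[Z]`. -/
def IsSmallSet (A : Set FIN) : Prop := ∀ Z : ℕ → FIN, IsBSeq Z → ¬ BU Z ⊆ A

/-- `B` is `α`-uniform on `X`. -/
inductive AlphaUniform : Ordinal.{0} → Set (List FIN) → (ℕ → FIN) → Prop where
  | zero (X : ℕ → FIN) : AlphaUniform 0 ({([] : List FIN)} : Set (List FIN)) X
  | succ (β : Ordinal.{0}) (B : Set (List FIN)) (X : ℕ → FIN)
      (h : ∀ s ∈ BU X, AlphaUniform β (Bsub B s) (tailSeq X (sMax s))) :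
      AlphaUniform (β + 1) B X
  | limit (α : Ordinal.{0}) (B : Set (List FIN)) (X : ℕ → FIN) (f : FIN → Ordinal.{0})
      (hl : α ≠ 0 ∧ ∀ a < α, Order.succ a < α)
      (h1 : ∀ s ∈ BU X, f s < α)
      (h2 : ∀ s ∈ BU X, AlphaUniform (f s) (Bsub B s) (tailSeq X (sMax s)))
      (h3 : ∀ γ < α, IsSmallSet {s | s ∈ BU X ∧ f s ≤ γ}) :
      AlphaUniform α B X

/-- `B` is a uniform family on `X` (i.e. `α`-uniform for some `α < ω₁`). -/
def IsUniformFam (B : Set (List FIN)) (X : ℕ → FIN) : Prop :=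
  ∃ α : Ordinal.{0}, α < (Cardinal.aleph 1).ord ∧ AlphaUniform α B X

/-! ### Separation types and the canonical map `Γ_γ` -/

/-- The six labels `sm, min-sep, max-sep, minmax-sep, sss, vss`. -/
inductive SepType : Type where
  | sm | minsep | maxsep | minmaxsep | sss | vss
  deriving DecidableEq

/-- The maps on `FIN` associated to the labels. -/
def SepType.eval : SepType → FIN → Finset ℕ
  | .sm, _ => ∅
  | .minsep, s => {sMin s}
  | .maxsep, s => {sMax s}
  | .minmaxsep, s => {sMin s, sMax s}
  | .sss, s => s.1
  | .vss, s => s.1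

/-- One step `k_i ↦ k_{i+1}` in the construction of `Γ_γ(a)`. -/
noncomputable def nextIdx (γ : List FIN → SepType) (a : List FIN) (k : ℕ) : ℕ :=
  if a.length ≤ k then a.length
  else if γ (a.take k) = SepType.sss then
    (if h : ∃ m, k < m ∧ m ≤ a.length ∧ γ (a.take (m - 1)) = SepType.vss then Nat.find h
     else a.length)
  else if h2 : γ (a.take k) = SepType.minsep ∧
      ∃ l, k < l ∧ l < a.length ∧ γ (a.take l) ≠ SepType.sm then
    (if γ (a.take (Nat.find h2.2)) = SepType.maxsep then Nat.find h2.2 + 1 else k + 1)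
  else k + 1

/-- The sequence of cut points `k_0 = 0 < k_1 < ...` for `Γ_γ(a)`. -/
noncomputable def cuts (γ : List FIN → SepType) (a : List FIN) : ℕ → ℕ
  | 0 => 0
  | i + 1 => nextIdx γ a (cuts γ a i)

/-- The `i`-th entry `⋃_{k_i ≤ j < k_{i+1}} γ(a↾j)(a(j))` of `Γ_γ(a)`. -/
noncomputable def gammaSeg (γ : List FIN → SepType) (a : List FIN) (i : ℕ) : Finset ℕ :=
  (Finset.Ico (cuts γ a i) (cuts γ a (i + 1))).biUnion
    fun j => (γ (a.take j)).eval (a.getD j default)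

/-- `Γ_γ(a)`, with all terms equal to `∅` omitted. -/
noncomputable def GammaList (γ : List FIN → SepType) (a : List FIN) : List (Finset ℕ) :=
  ((List.range a.length).map (gammaSeg γ a)).filter fun s => decide (s ≠ (∅ : Finset ℕ))

/-- `x` is a finite block sequence with `a <_b x`, `x ≤ Y` and `a⌢x ∈ F`. -/
def ExtendsToFront (F : Set (List FIN)) (Y : ℕ → FIN) (a x : List FIN) : Prop :=
  IsFBSeq x ∧ listblt a x ∧ finLE x Y ∧ (a ++ x) ∈ F

/-- `l` is the least index `≥ 1` with `γ(a⌢(x↾l)) ≠ sm`. -/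
def FirstNonSm (γ : List FIN → SepType) (a x : List FIN) (l : ℕ) : Prop :=
  1 ≤ l ∧ l ≤ x.length ∧ γ (a ++ x.take l) ≠ SepType.sm ∧
    ∀ l', 1 ≤ l' → l' < l → γ (a ++ x.take l') = SepType.sm

/-- `γ` is admissible with respect to the front `F` on `X`. -/
structure Admissible (F : Set (List FIN)) (X : ℕ → FIN) (γ : List FIN → SepType) : Prop where
  cond1 : ∀ a ∈ hatF F, γ a = SepType.sss →
    ∀ x : List FIN, IsFBSeq x → listblt a x → (a ++ x) ∈ hatF F →
      ∀ k, γ (a ++ x.take k) = SepType.vss →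
        (∀ k' < k, γ (a ++ x.take k') ≠ SepType.vss) →
        ∀ l < k, γ (a ++ x.take l) = SepType.sm ∨ γ (a ++ x.take l) = SepType.sss
  cond2 : ∀ a ∈ hatF F \ F,
    (∀ x, ExtendsToFront F X a x → ∀ k ≤ x.length, γ (a ++ x.take k) = SepType.sm) ∨
    (∀ x, ExtendsToFront F X a x → ∃ k ≤ x.length, γ (a ++ x.take k) ≠ SepType.sm)
  cond3 : ∀ a ∈ hatF F \ F, γ a = SepType.minsep →
    (∀ x, ExtendsToFront F X a x → ∃ l, FirstNonSm γ a x l) →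
    ((∀ x, ExtendsToFront F X a x → ∀ l, FirstNonSm γ a x l →
        γ (a ++ x.take l) = SepType.maxsep) ∨
     (∀ x, ExtendsToFront F X a x → ∀ l, FirstNonSm γ a x l →
        γ (a ++ x.take l) ≠ SepType.maxsep))

/-! ### Marked concatenation, separating and mixing -/

/-- `a□⌢x`: concatenation, where the mark `m = true` (that is, `a↑`) means that the last
block of `a` is unioned with the first block of `x`. -/
def mcat (a : List FIN) (m : Bool) (x : List FIN) : List FIN :=
  match m, a.getLast?, x with
  | true, some s, t :: ts => a.dropLast ++ (funion s t :: ts)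
  | _, _, _ => a ++ x

/-- `[Y/a]`: the members of `[Y]` lying beyond all blocks of `a`. -/
def BUafter (Y : ℕ → FIN) (a : List FIN) : Set FIN :=
  {s | s ∈ BU Y ∧ ∀ t ∈ a, blt t s}

/-- `x` is a (possibly empty) finite block sequence `≤ Y/(a,b)`. -/
def leqAfter (x : List FIN) (Y : ℕ → FIN) (a b : List FIN) : Prop :=
  IsFBSeq x ∧ finLE x Y ∧ listblt a x ∧ listblt b x

/-- `Y` separates `a□` and `b□`. -/
def Separates (F : Set (List FIN)) (g : List FIN → ℕ) (Y : ℕ → FIN)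
    (a : List FIN) (m : Bool) (b : List FIN) (m' : Bool) : Prop :=
  ∀ x y : List FIN, leqAfter x Y a b → leqAfter y Y a b →
    mcat a m x ∈ F → mcat b m' y ∈ F → g (mcat a m x) ≠ g (mcat b m' y)

/-- `Y` mixes `a□` and `b□`. -/
def Mixes (F : Set (List FIN)) (g : List FIN → ℕ) (Y : ℕ → FIN)
    (a : List FIN) (m : Bool) (b : List FIN) (m' : Bool) : Prop :=
  ∀ Z : ℕ → FIN, IsBSeq Z → seqLE Z Y → ¬ Separates F g Z a m b m'

/-- `Y` decides `a□` and `b□`. -/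
def Decides (F : Set (List FIN)) (g : List FIN → ℕ) (Y : ℕ → FIN)
    (a : List FIN) (m : Bool) (b : List FIN) (m' : Bool) : Prop :=
  Separates F g Y a m b m' ∨ Mixes F g Y a m b m'

/-- `a□` is strongly mixed by `Y`. -/
def StronglyMixed (F : Set (List FIN)) (g : List FIN → ℕ) (Y : ℕ → FIN)
    (a : List FIN) (m : Bool) : Prop :=
  ∀ s ∈ BUafter Y a, ∀ t ∈ BUafter Y a,
    Mixes F g Y (mcat a m [s]) false (mcat a m [t]) false

/-- `a□` is min-separated by `Y`. -/
def MinSeparated (F : Set (List FIN)) (g : List FIN → ℕ) (Y : ℕ → FIN)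
    (a : List FIN) (m : Bool) : Prop :=
  ∀ s ∈ BUafter Y a, ∀ t ∈ BUafter Y a,
    (Mixes F g Y (mcat a m [s]) false (mcat a m [t]) false ↔ sMin s = sMin t)

/-- `a□` is max-separated by `Y`. -/
def MaxSeparated (F : Set (List FIN)) (g : List FIN → ℕ) (Y : ℕ → FIN)
    (a : List FIN) (m : Bool) : Prop :=
  ∀ s ∈ BUafter Y a, ∀ t ∈ BUafter Y a,
    (Mixes F g Y (mcat a m [s]) false (mcat a m [t]) false ↔ sMax s = sMax t)

/-- `a□` is minmax-separated by `Y`. -/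
def MinMaxSeparated (F : Set (List FIN)) (g : List FIN → ℕ) (Y : ℕ → FIN)
    (a : List FIN) (m : Bool) : Prop :=
  ∀ s ∈ BUafter Y a, ∀ t ∈ BUafter Y a,
    (Mixes F g Y (mcat a m [s]) false (mcat a m [t]) false ↔ (sMin s = sMin t ∧ sMax s = sMax t))

/-- `a□` is strongly separated by `Y`. -/
def StronglySeparated (F : Set (List FIN)) (g : List FIN → ℕ) (Y : ℕ → FIN)
    (a : List FIN) (m : Bool) : Prop :=
  ∀ s ∈ BUafter Y a, ∀ t ∈ BUafter Y a,
    (Mixes F g Y (mcat a m [s]) false (mcat a m [t]) false ↔ s = t)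

/-- `a□` is separated in some sense by `Y`. -/
def SepSomeSense (F : Set (List FIN)) (g : List FIN → ℕ) (Y : ℕ → FIN)
    (a : List FIN) (m : Bool) : Prop :=
  MinSeparated F g Y a m ∨ MaxSeparated F g Y a m ∨ MinMaxSeparated F g Y a m ∨
    StronglySeparated F g Y a m

/-- `a□` is completely decided by `Y`. -/
def CompletelyDecided (F : Set (List FIN)) (g : List FIN → ℕ) (Y : ℕ → FIN)
    (a : List FIN) (m : Bool) : Prop :=
  StronglyMixed F g Y a m ∨ SepSomeSense F g Y a m

/-- `a□` is still strongly separated by `Y`. -/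
def StillStronglySep (F : Set (List FIN)) (g : List FIN → ℕ) (Y : ℕ → FIN)
    (a : List FIN) (m : Bool) : Prop :=
  StronglySeparated F g Y a m ∧
    ∀ s ∈ BUafter Y a, Mixes F g Y (mcat a m [s]) false (a ++ [s]) true

/-- `a□` is very strongly separated by `Y`. -/
def VeryStronglySep (F : Set (List FIN)) (g : List FIN → ℕ) (Y : ℕ → FIN)
    (a : List FIN) (m : Bool) : Prop :=
  StronglySeparated F g Y a m ∧
    ∀ s ∈ BUafter Y a, Separates F g Y (mcat a m [s]) false (a ++ [s]) true

/-- A zero-one law: the relation `P s t` holds for all admissible `s <_b t ∈ [Y/(a,b)]`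
or for none of them. -/
def ZOL (Y : ℕ → FIN) (a b : List FIN) (D P : FIN → FIN → Prop) : Prop :=
  (∀ s t : FIN, s ∈ BUafter Y (a ++ b) → t ∈ BUafter Y (a ++ b) → blt s t → D s t → P s t) ∨
  (∀ s t : FIN, s ∈ BUafter Y (a ++ b) → t ∈ BUafter Y (a ++ b) → blt s t → D s t → ¬ P s t)

/-- `x` is a finite block sequence with `a <_b x`, `x ≤ Y` and `a□⌢x ∈ F`. -/
def ExtendsToFrontM (F : Set (List FIN)) (Y : ℕ → FIN) (a : List FIN) (m : Bool)
    (x : List FIN) : Prop :=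
  IsFBSeq x ∧ listblt a x ∧ finLE x Y ∧ mcat a m x ∈ F

/-- `k` is the least stage `≥ 1` such that `a⌢(x↾k)` is separated in some sense by `Y`. -/
def LeastSepStage (F : Set (List FIN)) (g : List FIN → ℕ) (Y : ℕ → FIN)
    (a x : List FIN) (k : ℕ) : Prop :=
  1 ≤ k ∧ k ≤ x.length ∧ SepSomeSense F g Y (a ++ x.take k) false ∧
    ∀ k', 1 ≤ k' → k' < k → ¬ SepSomeSense F g Y (a ++ x.take k') false

/-- `Y` is canonical for `g`. -/
def CanonicalFor (F : Set (List FIN)) (g : List FIN → ℕ) (Y : ℕ → FIN) : Prop :=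
  (∀ a ∈ hatRestrict F Y, ∀ b ∈ hatRestrict F Y, ∀ m m' : Bool, Decides F g Y a m b m') ∧
  (∀ a ∈ hatRestrict F Y, ∀ m : Bool, CompletelyDecided F g Y a m) ∧
  (∀ a ∈ hatRestrict F Y, ∀ ma ms : Bool,
    ZOL Y a a (fun s _ => mcat a ma [s] ∈ hatRestrict F Y)
      (fun s _ => Mixes F g Y a ma (mcat a ma [s]) ms)) ∧
  (∀ a ∈ hatRestrict F Y, ∀ b ∈ hatRestrict F Y, ∀ ma mb ms ms' : Bool,
    ZOL Y a b
      (fun s _ => mcat a ma [s] ∈ hatRestrict F Y ∧ mcat b mb [s] ∈ hatRestrict F Y)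
      (fun s _ => Mixes F g Y (mcat a ma [s]) ms (mcat b mb [s]) ms')) ∧
  (∀ a ∈ hatRestrict F Y, ∀ ma ms mt : Bool,
    ZOL Y a a
      (fun s t => mcat a ma [s] ∈ hatRestrict F Y ∧
        mcat (mcat a ma [s]) ms [t] ∈ hatRestrict F Y)
      (fun s t => Mixes F g Y (mcat a ma [s]) ms (mcat (mcat a ma [s]) ms [t]) mt)) ∧
  (∀ a ∈ hatRestrict F Y, ∀ b ∈ hatRestrict F Y, ∀ ma mb ms ms' mt : Bool,
    ZOL Y a b
      (fun s t => mcat a ma [s] ∈ hatRestrict F Y ∧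
        mcat (mcat b mb [s]) ms' [t] ∈ hatRestrict F Y)
      (fun s t => Mixes F g Y (mcat a ma [s]) ms (mcat (mcat b mb [s]) ms' [t]) mt)) ∧
  (∀ a : List FIN, ∀ m : Bool,
    ((a ∈ hatRestrict F Y ∧ a ∉ F) ∨ (a ∈ F ∧ finLE a Y ∧ m = true)) →
    ((∀ x, ExtendsToFrontM F Y a m x →
        ∀ k, 1 ≤ k → k ≤ x.length → StronglyMixed F g Y (mcat a m (x.take k)) false) ∨
     (∀ x, ExtendsToFrontM F Y a m x →
        ∃ k, 1 ≤ k ∧ k ≤ x.length ∧ SepSomeSense F g Y (mcat a m (x.take k)) false))) ∧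
  (∀ a ∈ hatRestrict F Y, MinSeparated F g Y a false →
    (∀ x, ExtendsToFrontM F Y a false x →
      ∃ k, 1 ≤ k ∧ k ≤ x.length ∧ SepSomeSense F g Y (a ++ x.take k) false) →
    ((∀ x, ExtendsToFrontM F Y a false x → ∀ k, LeastSepStage F g Y a x k →
        MaxSeparated F g Y (a ++ x.take k) false) ∨
     (∀ x, ExtendsToFrontM F Y a false x → ∀ k, LeastSepStage F g Y a x k →
        ¬ MaxSeparated F g Y (a ++ x.take k) false)))

/-- The tripling operation `Y ↦ (Y(3i) ∪ Y(3i+1) ∪ Y(3i+2))_{i}`. -/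
def tripleUp (Y : ℕ → FIN) : ℕ → FIN := fun i =>
  funion (Y (3 * i)) (funion (Y (3 * i + 1)) (Y (3 * i + 2)))

/-- `Z/a`. -/
noncomputable def seqAfter (Z : ℕ → FIN) (a : List FIN) : ℕ → FIN :=
  match a.getLast? with
  | none => Z
  | some s => tailSeq Z (sMax s)

/-- `Z/(a,b)`. -/
noncomputable def seqAfter2 (Z : ℕ → FIN) (a b : List FIN) : ℕ → FIN :=
  seqAfter (seqAfter Z a) b

/-- `γ` is the parameter function of the canonical `Y`: it records, for each
`a ∈ (F̂∖F)|Y`, the way in which `a` is completely decided by `Y`. -/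
def IsParameterOf (F : Set (List FIN)) (g : List FIN → ℕ) (Y : ℕ → FIN)
    (γ : List FIN → SepType) : Prop :=
  ∀ a : List FIN, a ∈ hatF F → a ∉ F → finLE a Y →
    ((γ a = SepType.sm ↔ StronglyMixed F g Y a false) ∧
     (γ a = SepType.minsep ↔ MinSeparated F g Y a false) ∧
     (γ a = SepType.maxsep ↔ MaxSeparated F g Y a false) ∧
     (γ a = SepType.minmaxsep ↔ MinMaxSeparated F g Y a false) ∧
     (γ a = SepType.sss ↔ StillStronglySep F g Y a false) ∧
     (γ a = SepType.vss ↔ VeryStronglySep F g Y a false))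

/-- The family `U↾F` generated by the sets `F|Y` with `[Y] ∈ U`, `Y ≤ X`. -/
def UFront (U : Ultrafilter FIN) (F : Set (List FIN)) (X : ℕ → FIN) : Set (Set (List FIN)) :=
  {A | A ⊆ F ∧ ∃ Y : ℕ → FIN, IsBSeq Y ∧ seqLE Y X ∧ BU Y ∈ U ∧ frontRestrict F Y ⊆ A}

/-! ### Auxiliary lemmas (Part A: basics) -/

namespace Stmt19Aux

lemma sMin_mem (s : FIN) : sMin s ∈ s.1 := Finset.min'_mem _ _

lemma sMax_mem (s : FIN) : sMax s ∈ s.1 := Finset.max'_mem _ _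

lemma sMin_le_sMax (s : FIN) : sMin s ≤ sMax s :=
  Finset.min'_le _ _ (sMax_mem s)

lemma le_sMax {s : FIN} {x : ℕ} (hx : x ∈ s.1) : x ≤ sMax s :=
  Finset.le_max' _ _ hx

lemma sMin_le {s : FIN} {x : ℕ} (hx : x ∈ s.1) : sMin s ≤ x :=
  Finset.min'_le _ _ hx

lemma blt_trans {s t u : FIN} (h1 : blt s t) (h2 : blt t u) : blt s u :=
  lt_of_lt_of_le h1 (le_trans (sMin_le_sMax t) (le_of_lt h2))

lemma mem_BU_self (X : ℕ → FIN) (i : ℕ) : X i ∈ BU X := by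
  refine ⟨{i}, Finset.singleton_nonempty i, ?_⟩
  ext x
  simp

/-- blocks used in a representation are below the whole set -/
lemma rep_subset {s : FIN} {X : ℕ → FIN} {I : Finset ℕ}
    (hrep : s.1 = I.biUnion fun i => (X i).1) {i : ℕ} (hi : i ∈ I) :
    (X i).1 ⊆ s.1 := by
  rw [hrep]; exact Finset.subset_biUnion_of_mem (fun j => (X j).1) hi

lemma rep_sMin_le {s : FIN} {X : ℕ → FIN} {I : Finset ℕ}
    (hrep : s.1 = I.biUnion fun i => (X i).1) {i : ℕ} (hi : i ∈ I) :
    sMin s ≤ sMin (X i) :=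
  sMin_le (rep_subset hrep hi (sMin_mem _))

/-- a union of members of `BU Y` is in `BU Y` -/
lemma BU_of_blocks {s : FIN} {X Y : ℕ → FIN} {I : Finset ℕ} (hI : I.Nonempty)
    (hrep : s.1 = I.biUnion fun i => (X i).1)
    (hmem : ∀ i ∈ I, X i ∈ BU Y) : s ∈ BU Y := by
  classical
  set g : ℕ → Finset ℕ := fun i => if h : X i ∈ BU Y then h.choose else ∅ with hg
  have hgspec : ∀ i ∈ I, (g i).Nonempty ∧ (X i).1 = (g i).biUnion fun j => (Y j).1 := by
    intro i hi
    have h := hmem i hi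
    simp only [hg, dif_pos h]
    exact ⟨h.choose_spec.1, h.choose_spec.2⟩
  refine ⟨I.biUnion g, ?_, ?_⟩
  · obtain ⟨i, hi⟩ := hI
    obtain ⟨j, hj⟩ := (hgspec i hi).1
    exact ⟨j, Finset.mem_biUnion.mpr ⟨i, hi, hj⟩⟩
  · rw [hrep, Finset.biUnion_biUnion]
    exact Finset.biUnion_congr rfl (fun i hi => (hgspec i hi).2)

lemma BU_mono {Y Z : ℕ → FIN} (h : seqLE Y Z) : BU Y ⊆ BU Z := by
  rintro s ⟨I, hI, hrep⟩
  exact BU_of_blocks hI hrep (fun i _ => h i)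

lemma seqLE_refl (X : ℕ → FIN) : seqLE X X := fun i => mem_BU_self X i

lemma seqLE_trans {X Y Z : ℕ → FIN} (h1 : seqLE X Y) (h2 : seqLE Y Z) : seqLE X Z :=
  fun i => BU_mono h2 (h1 i)

lemma finLE_mono {a : List FIN} {Y Z : ℕ → FIN} (h : finLE a Y) (hYZ : seqLE Y Z) :
    finLE a Z := fun s hs => BU_mono hYZ (h s hs)

lemma bseq_mono_blt {X : ℕ → FIN} (hX : IsBSeq X) {i j : ℕ} (h : i < j) :
    blt (X i) (X j) := by
  induction j with
  | zero => omega
  | succ j ih =>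
    rcases Nat.lt_succ_iff_lt_or_eq.mp h with h' | h'
    · exact blt_trans (ih h') (hX j)
    · subst h'; exact hX i

lemma sMin_bseq_ge {X : ℕ → FIN} (hX : IsBSeq X) (i : ℕ) : i ≤ sMin (X i) := by
  induction i with
  | zero => omega
  | succ i ih =>
    have h2 : sMax (X i) < sMin (X (i+1)) := hX i
    have h3 := sMin_le_sMax (X i)
    omega

lemma funion_mem_BU {s t : FIN} {Z : ℕ → FIN} (hs : s ∈ BU Z) (ht : t ∈ BU Z) :
    funion s t ∈ BU Z := by
  obtain ⟨I, hI, hIr⟩ := hs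
  obtain ⟨J, hJ, hJr⟩ := ht
  refine ⟨I ∪ J, hI.mono Finset.subset_union_left, ?_⟩
  show s.1 ∪ t.1 = _
  ext x
  simp only [Finset.mem_union, Finset.mem_biUnion, hIr, hJr]
  constructor
  · rintro (⟨i, hi, hx⟩ | ⟨i, hi, hx⟩)
    · exact ⟨i, Or.inl hi, hx⟩
    · exact ⟨i, Or.inr hi, hx⟩
  · rintro ⟨i, hi, hx⟩
    rcases hi with h | h
    · exact Or.inl ⟨i, h, hx⟩
    · exact Or.inr ⟨i, h, hx⟩

/-- tails: sets of elements with large min are in U -/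
lemma min_tail_mem {U : Ultrafilter FIN} (hU : IsStableOrderedUnion U) (n : ℕ) :
    {s : FIN | n < sMin s} ∈ U := by
  by_contra h
  have h2 : {s : FIN | n < sMin s}ᶜ ∈ U := Ultrafilter.compl_mem_iff_notMem.mpr h
  obtain ⟨Z, hZB, hZU, hZsub⟩ := hU.1 _ h2
  have h3 := hZsub (mem_BU_self Z (n+1))
  have h4 := sMin_bseq_ge hZB (n+1)
  simp only [Set.mem_compl_iff, Set.mem_setOf_eq, not_lt] at h3
  omega

/-- refinement: given A ∈ U and Y with BU Y ∈ U, find Z ≤ Y with [Z] ⊆ A ∩ [Y] -/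
lemma refine {U : Ultrafilter FIN} (hU : IsStableOrderedUnion U)
    {A : Set FIN} (hA : A ∈ U) {Y : ℕ → FIN} (hY : BU Y ∈ U) :
    ∃ Z : ℕ → FIN, IsBSeq Z ∧ BU Z ∈ U ∧ seqLE Z Y ∧ BU Z ⊆ A ∩ BU Y := by
  obtain ⟨Z, hZB, hZU, hZsub⟩ := hU.1 (A ∩ BU Y) (Filter.inter_mem hA hY)
  exact ⟨Z, hZB, hZU, fun i => (hZsub (mem_BU_self Z i)).2, hZsub⟩

/-- leStar glue: picking elements of [W] with large enough min lands them in [Y] -/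
lemma leStar_glue {W Y : ℕ → FIN} (h : leStar W Y) {t : FIN} (ht : t ∈ BU W)
    (hmin : h.choose < sMin t) : t ∈ BU Y := by
  obtain ⟨I, hI, hrep⟩ := ht
  refine BU_of_blocks hI hrep (fun i hi => ?_)
  exact h.choose_spec i (lt_of_lt_of_le hmin (rep_sMin_le hrep hi))

end Stmt19Aux
namespace Stmt19Aux

/-! ### Part B: interval machinery, parity coloring, and the diagonalization lemma -/

/-- interval boundaries adapted to `f` -/
def ints (f : ℕ → ℕ) : ℕ → ℕ := fun k => Nat.rec 0 (fun _ b => b + f b + 1) k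

lemma ints_succ (f : ℕ → ℕ) (k : ℕ) : ints f (k+1) = ints f k + f (ints f k) + 1 := rfl

lemma ints_ge (f : ℕ → ℕ) (k : ℕ) : k ≤ ints f k := by
  induction k with
  | zero => simp [ints]
  | succ k ih => rw [ints_succ]; omega

lemma ints_mono (f : ℕ → ℕ) : Monotone (ints f) := by
  apply monotone_nat_of_le_succ
  intro k; rw [ints_succ]; omega

/-- interval index of a point -/
def idxf (f : ℕ → ℕ) (x : ℕ) : ℕ := Nat.findGreatest (fun k => ints f k ≤ x) x

lemma ints_zero (f : ℕ → ℕ) : ints f 0 = 0 := rfl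

lemma idxf_le (f : ℕ → ℕ) (x : ℕ) : ints f (idxf f x) ≤ x := by
  have h0 : ints f 0 ≤ x := by rw [ints_zero]; exact Nat.zero_le x
  exact Nat.findGreatest_spec (P := fun k => ints f k ≤ x) (Nat.zero_le x) h0

lemma lt_idxf_succ (f : ℕ → ℕ) (x : ℕ) : x < ints f (idxf f x + 1) := by
  by_cases h : idxf f x + 1 ≤ x
  · by_contra h2
    push_neg at h2
    exact Nat.findGreatest_is_greatest (Nat.lt_succ_self _) h h2
  · have h1 : x ≤ idxf f x := by omega
    have h2 := ints_ge f (idxf f x + 1)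
    omega

lemma idxf_mono (f : ℕ → ℕ) : Monotone (idxf f) := by
  intro x y h
  exact Nat.le_findGreatest (le_trans (Nat.findGreatest_le x) h) (le_trans (idxf_le f x) h)

lemma le_idxf (f : ℕ → ℕ) {k x : ℕ} (h : ints f k ≤ x) : k ≤ idxf f x :=
  Nat.le_findGreatest (le_trans (ints_ge f k) h) h

lemma idxf_gap {f : ℕ → ℕ} (hf : Monotone f) {x y : ℕ}
    (h : idxf f x + 2 ≤ idxf f y) : f x < y := by
  have h1 := lt_idxf_succ f x
  have h2 := idxf_le f y
  have h3 : ints f (idxf f x + 2) ≤ ints f (idxf f y) := ints_mono f h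
  have h4 : ints f (idxf f x + 2) = ints f (idxf f x + 1) + f (ints f (idxf f x + 1)) + 1 :=
    ints_succ f _
  have h5 : f x ≤ f (ints f (idxf f x + 1)) := hf (le_of_lt h1)
  omega

/-- cardinality of right-endpoints of a union of an ordered pair of finsets -/
lemma ecard_union {P Q : Finset ℕ} {p q : ℕ} (hp : p ∈ P) (hq : q ∈ Q)
    (hpmax : ∀ j ∈ P, j ≤ p) (hqmin : ∀ j ∈ Q, q ≤ j) (hpq : p ≤ q) :
    ((P ∪ Q).filter (fun j => j+1 ∉ P ∪ Q)).card + (if q ≤ p + 1 then 1 else 0)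
      = (P.filter (fun j => j+1 ∉ P)).card + (Q.filter (fun j => j+1 ∉ Q)).card := by
  classical
  set EP := P.filter (fun j => j+1 ∉ P) with hEP
  set EQ := Q.filter (fun j => j+1 ∉ Q) with hEQ
  have hpEP : p ∈ EP := by
    rw [hEP, Finset.mem_filter]
    refine ⟨hp, fun hc => ?_⟩
    have := hpmax _ hc; omega
  have hEU : (P ∪ Q).filter (fun j => j+1 ∉ P ∪ Q)
      = EQ ∪ (EP.erase p ∪ (if p + 2 ≤ q then ({p} : Finset ℕ) else ∅)) := by
    ext j
    constructor
    · intro hj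
      rw [Finset.mem_filter, Finset.mem_union] at hj
      obtain ⟨hjPQ, hj1⟩ := hj
      rw [Finset.mem_union] at hj1
      push_neg at hj1
      obtain ⟨hj1P, hj1Q⟩ := hj1
      rcases hjPQ with hjP | hjQ
      · by_cases hcase : j = p
        · subst hcase
          by_cases hpQ : j ∈ Q
          · exact Finset.mem_union_left _ (Finset.mem_filter.mpr ⟨hpQ, hj1Q⟩)
          · have hq1 : q ≠ j := fun hh => hpQ (hh ▸ hq)
            have hq2 : q ≠ j + 1 := fun hh => hj1Q (hh ▸ hq)
            have : j + 2 ≤ q := by omega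
            refine Finset.mem_union_right _ (Finset.mem_union_right _ ?_)
            rw [if_pos this]
            exact Finset.mem_singleton_self j
        · refine Finset.mem_union_right _ (Finset.mem_union_left _ ?_)
          exact Finset.mem_erase.mpr ⟨hcase, Finset.mem_filter.mpr ⟨hjP, hj1P⟩⟩
      · exact Finset.mem_union_left _ (Finset.mem_filter.mpr ⟨hjQ, hj1Q⟩)
    · intro hj
      rw [Finset.mem_filter, Finset.mem_union]
      rcases Finset.mem_union.mp hj with hjQ | hj'
      · rw [hEQ, Finset.mem_filter] at hjQ
        obtain ⟨hjQ, hj1Q⟩ := hjQ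
        refine ⟨Or.inr hjQ, ?_⟩
        rw [Finset.mem_union]
        rintro (hc | hc)
        · have := hpmax _ hc
          have := hqmin _ hjQ
          omega
        · exact hj1Q hc
      · rcases Finset.mem_union.mp hj' with hjE | hjS
        · rw [Finset.mem_erase, hEP, Finset.mem_filter] at hjE
          obtain ⟨hne, hjP, hj1P⟩ := hjE
          refine ⟨Or.inl hjP, ?_⟩
          rw [Finset.mem_union]
          rintro (hc | hc)
          · exact hj1P hc
          · have h1 := hqmin _ hc
            have h2 := hpmax _ hjP
            have h3 : p = j + 1 := by omega
            exact hj1P (h3 ▸ hp)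
        · by_cases hc : p + 2 ≤ q
          · rw [if_pos hc, Finset.mem_singleton] at hjS
            subst hjS
            refine ⟨Or.inl hp, ?_⟩
            rw [Finset.mem_union]
            rintro (hcc | hcc)
            · have := hpmax _ hcc; omega
            · have := hqmin _ hcc; omega
          · rw [if_neg hc] at hjS
            exact absurd hjS (Finset.notMem_empty _)
  have hdisj1 : Disjoint EQ (EP.erase p ∪ (if p + 2 ≤ q then ({p} : Finset ℕ) else ∅)) := by
    rw [Finset.disjoint_left]
    intro j hjQ hj'
    rw [hEQ, Finset.mem_filter] at hjQ
    have hjq := hqmin _ hjQ.1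
    rcases Finset.mem_union.mp hj' with hjE | hjS
    · rw [Finset.mem_erase, hEP, Finset.mem_filter] at hjE
      have := hpmax _ hjE.2.1
      have : j ≠ p := hjE.1
      omega
    · by_cases hc : p + 2 ≤ q
      · rw [if_pos hc, Finset.mem_singleton] at hjS
        omega
      · rw [if_neg hc] at hjS
        exact absurd hjS (Finset.notMem_empty _)
  have hdisj2 : Disjoint (EP.erase p) (if p + 2 ≤ q then ({p} : Finset ℕ) else ∅) := by
    rw [Finset.disjoint_left]
    intro j hjE hjS
    by_cases hc : p + 2 ≤ q
    · rw [if_pos hc, Finset.mem_singleton] at hjS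
      exact (Finset.mem_erase.mp hjE).1 hjS
    · rw [if_neg hc] at hjS
      exact absurd hjS (Finset.notMem_empty _)
  rw [hEU, Finset.card_union_of_disjoint hdisj1, Finset.card_union_of_disjoint hdisj2,
    Finset.card_erase_of_mem hpEP]
  have hpos : 0 < EP.card := Finset.card_pos.mpr ⟨p, hpEP⟩
  by_cases hc : p + 2 ≤ q
  · rw [if_pos hc, if_neg (by omega : ¬ q ≤ p + 1)]
    simp only [Finset.card_singleton]
    omega
  · rw [if_neg hc, if_pos (by omega : q ≤ p + 1)]
    simp only [Finset.card_empty]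
    omega

/-- the run-count of the image under `idx` -/
def rcF (idx : ℕ → ℕ) (u : FIN) : ℕ :=
  ((u.1.image idx).filter fun j => j+1 ∉ u.1.image idx).card

lemma rc_funion (idx : ℕ → ℕ) (hmono : Monotone idx) {s t : FIN} (h : blt s t) :
    rcF idx (funion s t) + (if idx (sMin t) ≤ idx (sMax s) + 1 then 1 else 0)
      = rcF idx s + rcF idx t := by
  classical
  have himg : (funion s t).1.image idx = s.1.image idx ∪ t.1.image idx := by
    show (s.1 ∪ t.1).image idx = _
    exact Finset.image_union _ _
  unfold rcF
  simp only [himg]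
  refine ecard_union (p := idx (sMax s)) (q := idx (sMin t))
    (Finset.mem_image_of_mem idx (sMax_mem s)) (Finset.mem_image_of_mem idx (sMin_mem t))
    ?_ ?_ (hmono (le_of_lt h))
  · rintro j hj
    obtain ⟨x, hx, rfl⟩ := Finset.mem_image.mp hj
    exact hmono (le_sMax hx)
  · rintro j hj
    obtain ⟨x, hx, rfl⟩ := Finset.mem_image.mp hj
    exact hmono (sMin_le hx)

end Stmt19Aux
namespace Stmt19Aux

/-- the finitely many blocks contained in `[0,k]` -/
noncomputable def blocksFin (k : ℕ) : Finset FIN :=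
  ((Finset.range (k+1)).powerset).subtype (fun t => t.Nonempty)

lemma mem_blocksFin {s : FIN} {k : ℕ} (h : sMax s ≤ k) : s ∈ blocksFin k := by
  rw [blocksFin, Finset.mem_subtype, Finset.mem_powerset]
  intro x hx
  rw [Finset.mem_range]
  have := le_sMax hx
  omega

/-- The diagonalization lemma: given `U`-large sets `B s` indexed by blocks, there is a
single `[Z] ∈ U`, `Z ≤ V₀`, with `t ∈ B s` for all `s <_b t` in `[Z]`. -/
lemma SEL {U : Ultrafilter FIN} (hU : IsStableOrderedUnion U)
    (B : FIN → Set FIN) (hB : ∀ s, B s ∈ U)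
    {V₀ : ℕ → FIN} (hV₀B : IsBSeq V₀) (hV₀U : BU V₀ ∈ U)
    (E : Set FIN) (hE : E ∈ U) :
    ∃ Z : ℕ → FIN, IsBSeq Z ∧ BU Z ∈ U ∧ seqLE Z V₀ ∧ BU Z ⊆ E ∧
      ∀ s t : FIN, s ∈ BU Z → t ∈ BU Z → blt s t → t ∈ B s := by
  classical
  -- the decreasing sets C k
  set C : ℕ → Set FIN := fun k => ⋂ s ∈ (blocksFin k : Finset FIN), B s with hC
  have hCU : ∀ k, C k ∈ U := by
    intro k
    exact (Filter.biInter_finset_mem _).mpr (fun s _ => hB s)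
  have hCmem : ∀ {k : ℕ} {t : FIN}, t ∈ C k → ∀ {s : FIN}, sMax s ≤ k → t ∈ B s := by
    intro k t ht s hs
    exact Set.mem_iInter₂.mp ht s (mem_blocksFin hs)
  -- the chain
  let T := {W : ℕ → FIN // IsBSeq W ∧ BU W ∈ U}
  have stepex : ∀ (k : ℕ) (W : T), ∃ W' : T, BU W'.1 ⊆ C k ∩ BU W.1 := by
    intro k W
    obtain ⟨Z, h1, h2, _, h4⟩ := refine hU (hCU k) W.2.2
    exact ⟨⟨Z, h1, h2⟩, h4⟩
  let step : ∀ (k : ℕ) (W : T), {W' : T // BU W'.1 ⊆ C k ∩ BU W.1} :=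
    fun k W => Classical.indefiniteDescription _ (stepex k W)
  let Xc : ℕ → T := fun k =>
    Nat.rec (step 0 ⟨V₀, hV₀B, hV₀U⟩).1 (fun k prev => (step (k+1) prev).1) k
  have hXc0 : BU (Xc 0).1 ⊆ C 0 ∩ BU V₀ := (step 0 ⟨V₀, hV₀B, hV₀U⟩).2
  have hXcS : ∀ k, BU (Xc (k+1)).1 ⊆ C (k+1) ∩ BU (Xc k).1 :=
    fun k => (step (k+1) (Xc k)).2
  have hXcC : ∀ k, BU (Xc k).1 ⊆ C k := by
    intro k
    cases k with
    | zero => exact fun t ht => (hXc0 ht).1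
    | succ k => exact fun t ht => (hXcS k ht).1
  have hXcV₀ : ∀ k, BU (Xc k).1 ⊆ BU V₀ := by
    intro k
    induction k with
    | zero => exact fun t ht => (hXc0 ht).2
    | succ k ih => exact fun t ht => ih ((hXcS k ht).2)
  have hXcmono : ∀ j k, j ≤ k → BU (Xc k).1 ⊆ BU (Xc j).1 := by
    intro j k hjk
    induction k with
    | zero =>
      have : j = 0 := by omega
      subst this; exact fun t ht => ht
    | succ k ih =>
      rcases Nat.lt_succ_iff_lt_or_eq.mp (Nat.lt_succ_of_le hjk) with h | h
      · exact fun t ht => ih (by omega) ((hXcS k ht).2)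
      · subst h; exact fun t ht => ht
  -- stability
  obtain ⟨Xst, hstB, hstU, hstar⟩ := hU.2 (fun k => (Xc k).1)
    (fun k => (Xc k).2.1) (fun k => (Xc k).2.2)
    (fun k => ⟨0, fun i _ => (hXcS k (mem_BU_self _ i)).2⟩)
  -- thresholds
  set nn : ℕ → ℕ := fun k => (hstar k).choose with hnn
  set m : ℕ → ℕ := fun k => (Finset.range (k+1)).sup nn with hm
  have hm_mono : Monotone m := by
    intro a b hab
    exact Finset.sup_mono (Finset.range_subset_range.mpr (by omega))
  have hm_ge : ∀ k, nn k ≤ m k := fun k => Finset.le_sup (Finset.self_mem_range_succ k)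
  have glue' : ∀ (k : ℕ) {t : FIN}, t ∈ BU Xst → m k < sMin t → t ∈ BU (Xc k).1 := by
    intro k t ht hmin
    exact leStar_glue (hstar k) ht (lt_of_le_of_lt (hm_ge k) hmin)
  -- the parity coloring
  set idx : ℕ → ℕ := idxf m with hidx
  set H0 : Set FIN := {u | rcF idx u % 2 = 0} with hH0def
  have hH0 : H0 ∈ U := by
    rcases Ultrafilter.mem_or_compl_mem U H0 with h | h
    · exact h
    exfalso
    obtain ⟨Z', hZ'B, _, hZ'sub⟩ := hU.1 _ h
    have hodd : ∀ u ∈ BU Z', rcF idx u % 2 = 1 := by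
      intro u hu
      have := hZ'sub hu
      simp only [hH0def, Set.mem_compl_iff, Set.mem_setOf_eq] at this
      omega
    have hj0 : 0 < ints m (idx (sMax (Z' 0)) + 2) :=
      lt_of_lt_of_le (by omega) (ints_ge m _)
    have hblt : blt (Z' 0) (Z' (ints m (idx (sMax (Z' 0)) + 2))) := bseq_mono_blt hZ'B hj0
    have hmerge := rc_funion idx (idxf_mono m) hblt
    have hst : idx (sMax (Z' 0)) + 2 ≤ idx (sMin (Z' (ints m (idx (sMax (Z' 0)) + 2)))) :=
      le_idxf m (sMin_bseq_ge hZ'B _)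
    have h1 := hodd _ (mem_BU_self Z' 0)
    have h2 := hodd _ (mem_BU_self Z' (ints m (idx (sMax (Z' 0)) + 2)))
    have h3 := hodd _ (funion_mem_BU (mem_BU_self Z' 0)
      (mem_BU_self Z' (ints m (idx (sMax (Z' 0)) + 2))))
    rw [if_neg (by omega :
      ¬ idx (sMin (Z' (ints m (idx (sMax (Z' 0)) + 2)))) ≤ idx (sMax (Z' 0)) + 1)] at hmerge
    omega
  -- the final refinement
  have hTT : (H0 ∩ BU Xst ∩ {u : FIN | m 0 < sMin u} ∩ E) ∈ U :=
    Filter.inter_mem (Filter.inter_mem (Filter.inter_mem hH0 hstU) (min_tail_mem hU (m 0))) hE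
  obtain ⟨Z, hZB, hZU, _, hZsub⟩ := refine hU hTT hstU
  have hZsub' : BU Z ⊆ H0 ∩ BU Xst ∩ {u : FIN | m 0 < sMin u} ∩ E :=
    fun u hu => (hZsub hu).1
  refine ⟨Z, hZB, hZU, ?_, fun u hu => (hZsub' hu).2, ?_⟩
  · intro i
    have h := hZsub' (mem_BU_self Z i)
    exact hXcV₀ 0 (glue' 0 h.1.1.2 h.1.2)
  · intro s t hsZ htZ hblt
    have hmerge := rc_funion idx (idxf_mono m) hblt
    have h1 : rcF idx s % 2 = 0 := (hZsub' hsZ).1.1.1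
    have h2 : rcF idx t % 2 = 0 := (hZsub' htZ).1.1.1
    have h3 : rcF idx (funion s t) % 2 = 0 := (hZsub' (funion_mem_BU hsZ htZ)).1.1.1
    have hgap : idx (sMax s) + 2 ≤ idx (sMin t) := by
      by_contra hcon
      rw [if_pos (by omega : idx (sMin t) ≤ idx (sMax s) + 1)] at hmerge
      omega
    have hmlt : m (sMax s) < sMin t := idxf_gap hm_mono hgap
    exact hCmem (hXcC (sMax s) (glue' (sMax s) (hZsub' htZ).1.1.2 hmlt)) (le_refl _)

end Stmt19Aux
namespace Stmt19Aux

/-! ### Part C: combinatorial forcing -/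

instance : IsTrans FIN blt := ⟨fun _ _ _ hab hbc => blt_trans hab hbc⟩

/-- `Y` accepts `a` (with respect to the partition class `A` of `F`) -/
def acc (F A : Set (List FIN)) (Y : ℕ → FIN) (a : List FIN) : Prop :=
  ∀ x : List FIN, IsFBSeq x → listblt a x → finLE x Y → (a ++ x) ∈ F → (a ++ x) ∈ A

/-- the collection of "good" block sequences -/
def DD (U : Ultrafilter FIN) (X : ℕ → FIN) (Y : ℕ → FIN) : Prop :=
  IsBSeq Y ∧ seqLE Y X ∧ BU Y ∈ U

/-- `Y` rejects `a`: no good refinement of `Y` accepts `a` -/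
def rej (U : Ultrafilter FIN) (X : ℕ → FIN) (F A : Set (List FIN))
    (Y : ℕ → FIN) (a : List FIN) : Prop :=
  ∀ Z : ℕ → FIN, DD U X Z → seqLE Z Y → ¬ acc F A Z a

lemma acc_mono {F A : Set (List FIN)} {Y Z : ℕ → FIN} (h : seqLE Z Y)
    {a : List FIN} (ha : acc F A Y a) : acc F A Z a :=
  fun x hx hxa hxf hxm => ha x hx hxa (finLE_mono hxf h) hxm

lemma rej_mono {U : Ultrafilter FIN} {X : ℕ → FIN} {F A : Set (List FIN)}
    {Y Z : ℕ → FIN} {a : List FIN} (h : rej U X F A Y a) (hZY : seqLE Z Y) :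
    rej U X F A Z a :=
  fun W hW hWZ => h W hW (seqLE_trans hWZ hZY)

lemma fbseq_pairwise {l : List FIN} (h : IsFBSeq l) : l.Pairwise blt :=
  List.isChain_iff_pairwise.mp h

lemma fbseq_tail {s : FIN} {x : List FIN} (h : IsFBSeq (s :: x)) : IsFBSeq x :=
  h.tail

lemma fbseq_head_blt {s : FIN} {x : List FIN} (h : IsFBSeq (s :: x)) :
    ∀ v ∈ x, blt s v := by
  have := List.pairwise_cons.mp (fbseq_pairwise h)
  exact this.1

lemma list_min_ge {b : List FIN} (hb : IsFBSeq b) :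
    ∀ (i : ℕ) (h : i < b.length), i ≤ sMin (b.get ⟨i, h⟩) := by
  intro i
  induction i with
  | zero => intro h; omega
  | succ i ih =>
    intro h
    have h1 : i < b.length := by omega
    have h2 := ih h1
    have h3 : blt (b.get ⟨i, h1⟩) (b.get ⟨i+1, h⟩) := by
      have := List.isChain_iff_getElem.mp hb i (by omega)
      exact this
    have h4 : sMax (b.get ⟨i, h1⟩) < sMin (b.get ⟨i+1, h⟩) := h3
    have h5 := sMin_le_sMax (b.get ⟨i, h1⟩)
    omega

lemma mem_take_get {α : Type} {l : List α} {i : ℕ} {u : α} (h : u ∈ l.take i) :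
    ∃ (j : ℕ) (hj : j < l.length), j < i ∧ l.get ⟨j, hj⟩ = u := by
  obtain ⟨⟨j, hj⟩, hget⟩ := List.mem_iff_get.mp h
  have hlen : (l.take i).length = min i l.length := List.length_take
  have hj1 : j < l.length := by omega
  have hj2 : j < i := by omega
  refine ⟨j, hj1, hj2, ?_⟩
  rw [← hget]
  simp

/-- one step of the forcing: below a rejected `a`, all one-block extensions are rejected -/
lemma forcingStep {U : Ultrafilter FIN} (hU : IsStableOrderedUnion U) {XA : ℕ → FIN}
    (F A : Set (List FIN)) (a : List FIN) (haF : a ∉ F)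
    {Y : ℕ → FIN} (hY : DD U XA Y) (hrej : rej U XA F A Y a) :
    ∃ Z : ℕ → FIN, DD U XA Z ∧ seqLE Z Y ∧
      ∀ s ∈ BU Z, (∀ u ∈ a, blt u s) → rej U XA F A Z (a ++ [s]) := by
  classical
  set S : Set FIN := {s | s ∈ BU Y ∧ (∀ u ∈ a, blt u s) ∧
    ∃ W : ℕ → FIN, DD U XA W ∧ seqLE W Y ∧ acc F A W (a ++ [s])} with hSdef
  by_cases hS : S ∈ U
  · exfalso
    set Wf : FIN → (ℕ → FIN) := fun s =>
      if h : s ∈ S then h.2.2.choose else Y with hWfdef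
    have hWfspec : ∀ s ∈ S, DD U XA (Wf s) ∧ seqLE (Wf s) Y ∧ acc F A (Wf s) (a ++ [s]) := by
      intro s hs
      simp only [hWfdef, dif_pos hs]
      exact hs.2.2.choose_spec
    have hBW : ∀ s, BU (Wf s) ∈ U := by
      intro s
      by_cases hs : s ∈ S
      · exact (hWfspec s hs).1.2.2
      · simp only [hWfdef, dif_neg hs]
        exact hY.2.2
    obtain ⟨Z, hZB, hZU, hZY, hZS, hZpair⟩ :=
      SEL hU (fun s => BU (Wf s)) hBW hY.1 hY.2.2 S hS
    have hZD : DD U XA Z := ⟨hZB, seqLE_trans hZY hY.2.1, hZU⟩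
    apply hrej Z hZD hZY
    intro x hxF hxblt hxfin hxmem
    match x, hxmem with
    | [], hxmem =>
      rw [List.append_nil] at hxmem
      exact absurd hxmem haF
    | s :: x', hxmem =>
      have hsZ : s ∈ BU Z := hxfin s (List.mem_cons_self)
      have hsS : s ∈ S := hZS hsZ
      obtain ⟨hWD, hWY, hacc⟩ := hWfspec s hsS
      have hx'f : IsFBSeq x' := fbseq_tail hxF
      have hhead : ∀ v ∈ x', blt s v := fbseq_head_blt hxF
      have hx'blt : listblt (a ++ [s]) x' := by
        intro u hu v hv
        rcases List.mem_append.mp hu with hu | hu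
        · exact hxblt u hu v (List.mem_cons_of_mem s hv)
        · rw [List.mem_singleton] at hu
          subst hu
          exact hhead v hv
      have hx'fin : finLE x' (Wf s) := by
        intro v hv
        exact hZpair s v hsZ (hxfin v (List.mem_cons_of_mem s hv)) (hhead v hv)
      have hmem' : ((a ++ [s]) ++ x') ∈ F := by
        rw [List.append_assoc]
        exact hxmem
      have := hacc x' hx'f hx'blt hx'fin hmem'
      rw [List.append_assoc] at this
      exact this
  · have hSc : Sᶜ ∈ U := Ultrafilter.compl_mem_iff_notMem.mpr hS
    obtain ⟨Z, hZB, hZU, hZY, hZsub⟩ := refine hU hSc hY.2.2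
    refine ⟨Z, ⟨hZB, seqLE_trans hZY hY.2.1, hZU⟩, hZY, ?_⟩
    intro s hsZ habove W hWD hWZ haccW
    apply (hZsub hsZ).1
    exact ⟨(hZsub hsZ).2, habove, W, hWD, seqLE_trans hWZ hZY, haccW⟩

/-- lists with entries in `S` and length at most `n` -/
noncomputable def listsLE (S : Finset FIN) : ℕ → Finset (List FIN)
  | 0 => {[]}
  | (n+1) => {[]} ∪ (S ×ˢ listsLE S n).image (fun p => p.1 :: p.2)

lemma mem_listsLE {S : Finset FIN} : ∀ {n : ℕ} {l : List FIN},
    l.length ≤ n → (∀ u ∈ l, u ∈ S) → l ∈ listsLE S n := by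
  intro n
  induction n with
  | zero =>
    intro l hl _
    have : l = [] := List.length_eq_zero_iff.mp (by omega)
    subst this
    simp [listsLE]
  | succ n ih =>
    intro l hl hmem
    match l with
    | [] => simp [listsLE]
    | u :: l' =>
      rw [listsLE, Finset.mem_union]
      right
      rw [Finset.mem_image]
      refine ⟨(u, l'), Finset.mem_product.mpr ⟨hmem u (List.mem_cons_self), ?_⟩, rfl⟩
      exact ih (by simpa using hl) (fun v hv => hmem v (List.mem_cons_of_mem u hv))

lemma fbseq_length_le {b : List FIN} (hb : IsFBSeq b) {m : ℕ}
    (hbl : ∀ u ∈ b, sMax u ≤ m) : b.length ≤ m + 1 := by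
  by_contra hc
  push_neg at hc
  have h1 : m + 1 < b.length := hc
  have h2 := list_min_ge hb (m+1) h1
  have h3 := hbl _ (List.get_mem b ⟨m+1, h1⟩)
  have h4 := sMin_le_sMax (b.get ⟨m+1, h1⟩)
  omega

end Stmt19Aux
namespace Stmt19Aux

noncomputable instance : Encodable FIN := Subtype.encodable

noncomputable example : Encodable (List FIN) := inferInstance

/-- the fusion: if `XA` rejects `[]`, there is a good `Z` such that no member of `F`
below `Z` lies in `A` -/
lemma fusion {U : Ultrafilter FIN} (hU : IsStableOrderedUnion U) {XA : ℕ → FIN}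
    (hXAB : IsBSeq XA) (hXAU : BU XA ∈ U) (F A : Set (List FIN))
    (hNW : IsNashWilliams F) (hrej0 : rej U XA F A XA []) :
    ∃ Z : ℕ → FIN, DD U XA Z ∧ ∀ b ∈ F, finLE b Z → IsFBSeq b → b ∉ A := by
  classical
  have hXAD : DD U XA XA := ⟨hXAB, seqLE_refl XA, hXAU⟩
  -- one step of the construction
  have stepex : ∀ (n : ℕ) (W : ℕ → FIN), DD U XA W → ∃ Z : ℕ → FIN,
      (DD U XA Z ∧ seqLE Z W) ∧
      ((∀ a : List FIN, Encodable.decode n = some a → a ∉ F → rej U XA F A W a →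
          ∀ s ∈ BU Z, (∀ u ∈ a, blt u s) → rej U XA F A Z (a ++ [s])) ∧
       (∀ a : List FIN, Encodable.decode n = some a → a ∉ F → ¬ rej U XA F A W a →
          acc F A Z a)) := by
    intro n W hW
    match hdec : Encodable.decode (α := List FIN) n with
    | none =>
      refine ⟨W, ⟨hW, seqLE_refl W⟩, fun a ha => ?_, fun a ha => ?_⟩ <;>
        · cases ha
    | some a =>
      by_cases haF : a ∈ F
      · refine ⟨W, ⟨hW, seqLE_refl W⟩, fun a' ha' ha'F => ?_, fun a' ha' ha'F => ?_⟩ <;>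
          · injection ha' with h
            subst h
            exact absurd haF ha'F
      · by_cases hr : rej U XA F A W a
        · obtain ⟨Z, hZD, hZW, hZstep⟩ := forcingStep hU F A a haF hW hr
          refine ⟨Z, ⟨hZD, hZW⟩, fun a' ha' _ _ => ?_, fun a' ha' _ hnr' => ?_⟩
          · injection ha' with h; subst h; exact hZstep
          · injection ha' with h; subst h; exact absurd hr hnr'
        · have hex : ∃ Z : ℕ → FIN, DD U XA Z ∧ seqLE Z W ∧ acc F A Z a := by
            rw [rej] at hr
            push_neg at hr
            obtain ⟨Z, h1, h2, h3⟩ := hr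
            exact ⟨Z, h1, h2, h3⟩
          obtain ⟨Z, hZD, hZW, hacc⟩ := hex
          refine ⟨Z, ⟨hZD, hZW⟩, fun a' ha' _ hr' => ?_, fun a' ha' _ _ => ?_⟩
          · injection ha' with h; subst h; exact absurd hr' hr
          · injection ha' with h; subst h; exact hacc
  -- the chain
  let T := {W : ℕ → FIN // DD U XA W}
  let step : ∀ (n : ℕ) (W : T), {Z : T // seqLE Z.1 W.1 ∧
      ((∀ a : List FIN, Encodable.decode n = some a → a ∉ F → rej U XA F A W.1 a →
          ∀ s ∈ BU Z.1, (∀ u ∈ a, blt u s) → rej U XA F A Z.1 (a ++ [s])) ∧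
       (∀ a : List FIN, Encodable.decode n = some a → a ∉ F → ¬ rej U XA F A W.1 a →
          acc F A Z.1 a))} := fun n W =>
    Classical.indefiniteDescription _ (by
      obtain ⟨Z, ⟨hZD, hZW⟩, h1, h2⟩ := stepex n W.1 W.2
      exact ⟨⟨Z, hZD⟩, hZW, h1, h2⟩)
  let V : ℕ → T := fun n => Nat.rec ⟨XA, hXAD⟩ (fun n prev => (step n prev).1) n
  have hVD : ∀ n, DD U XA (V n).1 := fun n => (V n).2
  have hVstep : ∀ n, seqLE (V (n+1)).1 (V n).1 := fun n => (step n (V n)).2.1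
  have hF3 : ∀ n, ∀ a : List FIN, Encodable.decode n = some a → a ∉ F →
      rej U XA F A (V n).1 a →
      ∀ s ∈ BU (V (n+1)).1, (∀ u ∈ a, blt u s) → rej U XA F A (V (n+1)).1 (a ++ [s]) :=
    fun n => (step n (V n)).2.2.1
  have hF4 : ∀ n, ∀ a : List FIN, Encodable.decode n = some a → a ∉ F →
      ¬ rej U XA F A (V n).1 a → acc F A (V (n+1)).1 a :=
    fun n => (step n (V n)).2.2.2
  have hVmono : ∀ p q, p ≤ q → seqLE (V q).1 (V p).1 := by
    intro p q hpq
    induction q with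
    | zero =>
      have : p = 0 := by omega
      subst this; exact seqLE_refl _
    | succ q ih =>
      rcases Nat.lt_succ_iff_lt_or_eq.mp (Nat.lt_succ_of_le hpq) with h | h
      · exact seqLE_trans (hVstep q) (ih (by omega))
      · subst h; exact seqLE_refl _
  -- the index function
  let Mf : FIN → ℕ := fun s =>
    1 + (listsLE (blocksFin (sMax s)) (sMax s + 1)).sup (fun l => Encodable.encode l)
  -- the diagonal sequence
  obtain ⟨Z, hZB, hZU, hZV₀, _, hZpair⟩ := SEL hU (fun s => BU (V (Mf s)).1)
    (fun s => (hVD (Mf s)).2.2) (hVD (Encodable.encode ([] : List FIN) + 1)).1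
    (hVD (Encodable.encode ([] : List FIN) + 1)).2.2 Set.univ Filter.univ_mem
  have hZD : DD U XA Z :=
    ⟨hZB, seqLE_trans hZV₀ (hVD (Encodable.encode ([] : List FIN) + 1)).2.1, hZU⟩
  refine ⟨Z, hZD, ?_⟩
  intro b hbF hbZ hbFB hbA
  -- main induction
  have main : ∀ i, i ≤ b.length → ∃ p, rej U XA F A (V p).1 (b.take i) := by
    intro i
    induction i with
    | zero =>
      intro _
      exact ⟨0, by rw [List.take_zero]; exact hrej0⟩
    | succ i ih =>
      intro hi1
      have hi : i < b.length := by omega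
      obtain ⟨p, hp⟩ := ih (by omega)
      have haF : b.take i ∉ F := by
        intro hc
        have hpre : b.take i <+: b := List.take_prefix i b
        have heq := hNW _ hc b hbF hpre
        have hlen : (b.take i).length = min i b.length := List.length_take
        rw [heq] at hlen
        omega
      have hdec : Encodable.decode (Encodable.encode (b.take i)) = some (b.take i) :=
        Encodable.encodek _
      have hrna : rej U XA F A (V (Encodable.encode (b.take i))).1 (b.take i) := by
        by_contra hc
        have hacc := hF4 _ _ hdec haF hc
        have hq : seqLE (V (max p (Encodable.encode (b.take i) + 1))).1
            (V (Encodable.encode (b.take i) + 1)).1 := hVmono _ _ (le_max_right _ _)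
        have hq2 : seqLE (V (max p (Encodable.encode (b.take i) + 1))).1 (V p).1 :=
          hVmono _ _ (le_max_left _ _)
        exact hp _ (hVD _) hq2 (acc_mono hq hacc)
      have hstep := hF3 _ _ hdec haF hrna
      have hsZ : b.get ⟨i, hi⟩ ∈ BU Z := hbZ _ (List.get_mem b ⟨i, hi⟩)
      have hsV : b.get ⟨i, hi⟩ ∈ BU (V (Encodable.encode (b.take i) + 1)).1 := by
        rcases Nat.eq_zero_or_pos i with hi0 | hipos
        · subst hi0
          rw [List.take_zero]
          exact BU_mono hZV₀ hsZ
        · obtain ⟨j, rfl⟩ : ∃ j, i = j + 1 := ⟨i - 1, by omega⟩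
          have hi' : j < b.length := by omega
          have hblt : blt (b.get ⟨j, hi'⟩) (b.get ⟨j+1, hi⟩) :=
            List.isChain_iff_getElem.mp hbFB j (by omega)
          have hs'Z : b.get ⟨j, hi'⟩ ∈ BU Z := hbZ _ (List.get_mem b ⟨j, hi'⟩)
          have hpair := hZpair _ _ hs'Z hsZ hblt
          have hbound : Encodable.encode (b.take (j+1)) + 1 ≤ Mf (b.get ⟨j, hi'⟩) := by
            have hmin := list_min_ge hbFB j hi'
            have hmem : b.take (j+1) ∈ listsLE (blocksFin (sMax (b.get ⟨j, hi'⟩)))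
                (sMax (b.get ⟨j, hi'⟩) + 1) := by
              apply mem_listsLE
              · have hlen : (b.take (j+1)).length = min (j+1) b.length :=
                  List.length_take
                have := sMin_le_sMax (b.get ⟨j, hi'⟩)
                omega
              · intro u hu
                obtain ⟨k, hk, hki, hget⟩ := mem_take_get hu
                apply mem_blocksFin
                rcases Nat.lt_or_ge k j with hlt | hge
                · have hblt2 : blt (b.get ⟨k, hk⟩) (b.get ⟨j, hi'⟩) := by
                    have hpw := List.pairwise_iff_get.mp (fbseq_pairwise hbFB)
                    exact hpw ⟨k, hk⟩ ⟨j, hi'⟩ (by simpa using hlt)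
                  rw [← hget]
                  have h4 : sMax (b.get ⟨k, hk⟩) < sMin (b.get ⟨j, hi'⟩) := hblt2
                  have h5 := sMin_le_sMax (b.get ⟨j, hi'⟩)
                  omega
                · have : k = j := by omega
                  subst this
                  rw [← hget]
            have hsup : Encodable.encode (b.take (j+1)) ≤ (listsLE
                (blocksFin (sMax (b.get ⟨j, hi'⟩))) (sMax (b.get ⟨j, hi'⟩) + 1)).sup
                (fun l => Encodable.encode l) :=
              Finset.le_sup (f := fun l => Encodable.encode l) hmem
            have hMf : Mf (b.get ⟨j, hi'⟩) = 1 + (listsLE (blocksFin (sMax (b.get ⟨j, hi'⟩)))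
                (sMax (b.get ⟨j, hi'⟩) + 1)).sup (fun l => Encodable.encode l) := rfl
            omega
          exact BU_mono (hVmono _ _ hbound) hpair
      have habove : ∀ u ∈ b.take i, blt u (b.get ⟨i, hi⟩) := by
        intro u hu
        obtain ⟨j, hj, hji, hget⟩ := mem_take_get hu
        rw [← hget]
        have hpw := List.pairwise_iff_get.mp (fbseq_pairwise hbFB)
        exact hpw ⟨j, hj⟩ ⟨i, hi⟩ (by simpa using hji)
      have hfin := hstep _ hsV habove
      have htake := List.take_concat_get hi
      rw [List.concat_eq_append] at htake
      refine ⟨Encodable.encode (b.take i) + 1, ?_⟩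
      rw [← htake]
      exact hfin
  obtain ⟨p, hp⟩ := main b.length (le_refl _)
  rw [List.take_length] at hp
  apply hp (V p).1 (hVD p) (seqLE_refl _)
  intro x hx hbltx hfinx hmemF
  have heq : b = b ++ x := hNW b hbF (b ++ x) hmemF ⟨x, rfl⟩
  rw [← heq]
  exact hbA

end Stmt19Aux
/-- `U↾F` is an ultrafilter on the base set `F`. -/
theorem stmt19 (U : Ultrafilter FIN) (hU : IsStableOrderedUnion U)
    (F : Set (List FIN)) (X : ℕ → FIN) (hXB : IsBSeq X) (hF : IsFront F X)
    (hXU : BU X ∈ U) :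
    (∅ : Set (List FIN)) ∉ UFront U F X ∧
    F ∈ UFront U F X ∧
    (∀ A B : Set (List FIN), A ∈ UFront U F X → B ∈ UFront U F X →
      A ∩ B ∈ UFront U F X) ∧
    (∀ A B : Set (List FIN), A ∈ UFront U F X → A ⊆ B → B ⊆ F → B ∈ UFront U F X) ∧
    (∀ A : Set (List FIN), A ⊆ F → A ∈ UFront U F X ∨ F \ A ∈ UFront U F X) := by
  classical
  obtain ⟨hNW, hFmem, hFront⟩ := hF
  refine ⟨?_, ?_, ?_, ?_, ?_⟩
  · -- the empty set is not in U↾F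
    rintro ⟨-, Y, hYB, hYX, hYU, hsub⟩
    obtain ⟨a, haF, hinit⟩ := hFront Y hYB hYX
    have hfin : finLE a Y := by
      intro s hs
      obtain ⟨⟨i, hi⟩, hget⟩ := List.mem_iff_get.mp hs
      rw [← hget, hinit ⟨i, hi⟩]
      exact Stmt19Aux.mem_BU_self Y i
    exact hsub ⟨haF, hfin⟩
  · -- F itself is in U↾F
    exact ⟨subset_rfl, X, hXB, Stmt19Aux.seqLE_refl X, hXU, fun b hb => hb.1⟩
  · -- closure under intersections
    rintro A B ⟨hAF, Y1, hY1B, hY1X, hY1U, hsub1⟩ ⟨hBF, Y2, hY2B, hY2X, hY2U, hsub2⟩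
    obtain ⟨Z, hZB, hZU, hZY2, hZsub⟩ := Stmt19Aux.refine hU hY1U hY2U
    have hZY1 : seqLE Z Y1 := fun i => (hZsub (Stmt19Aux.mem_BU_self Z i)).1
    refine ⟨fun b hb => hAF hb.1, Z, hZB, Stmt19Aux.seqLE_trans hZY1 hY1X, hZU, ?_⟩
    rintro b ⟨hbF, hbfin⟩
    exact ⟨hsub1 ⟨hbF, Stmt19Aux.finLE_mono hbfin hZY1⟩,
      hsub2 ⟨hbF, Stmt19Aux.finLE_mono hbfin hZY2⟩⟩
  · -- upward closure
    rintro A B ⟨hAF, Y, h1, h2, h3, hsub⟩ hAB hBF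
    exact ⟨hBF, Y, h1, h2, h3, fun b hb => hAB (hsub hb)⟩
  · -- the partition property
    intro A hAF
    by_cases hex : ∃ Y : ℕ → FIN, Stmt19Aux.DD U X Y ∧ Stmt19Aux.acc F A Y []
    · left
      obtain ⟨Y, ⟨hYB, hYX, hYU⟩, hacc⟩ := hex
      refine ⟨hAF, Y, hYB, hYX, hYU, ?_⟩
      rintro b ⟨hbF, hbfin⟩
      have := hacc b (hFmem b hbF).1 (fun u hu => (List.not_mem_nil hu).elim) hbfin
        (by rw [List.nil_append]; exact hbF)
      rw [List.nil_append] at this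
      exact this
    · right
      have hrej0 : Stmt19Aux.rej U X F A X [] := by
        intro Z hZD hZX hacc
        exact hex ⟨Z, hZD, hacc⟩
      obtain ⟨Z, ⟨hZB, hZX, hZU⟩, hmain⟩ := Stmt19Aux.fusion hU hXB hXU F A hNW hrej0
      refine ⟨Set.diff_subset, Z, hZB, hZX, hZU, ?_⟩
      rintro b ⟨hbF, hbfin⟩
      exact ⟨hbF, hmain b hbF hbfin (hFmem b hbF).1⟩
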